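/- Let T be a pruned tree of sequences and ξ a free inductive probability measure on T (⨅_{n ∈ ℕ} ξ(x↾n) = 0 for every x ∈ lim T). Define f_ξ : lim T → [0,1] by f_ξ(x) := ⨆_{n ∈ ℕ} a_{x↾n}. Then: (i) f_ξ is continuous; (ii) [0,1) ⊆ range f_ξ; and (iii) the restriction of f_ξ to the set lim T ∖ f_ξ⁻¹(Q_ξ) is a homeomorphism onto [0,1] ∖ Q_ξ. -/

import Mathlib

open scoped ENNReal
open MeasureTheory

noncomputable section

/-- A tree of sequences: a nonempty set of finite lists of naturals closed under prefixes. -/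
def IsTree (T : Set (List ℕ)) : Prop :=
  T.Nonempty ∧ ∀ s t : List ℕ, s <+: t → t ∈ T → s ∈ T

/-- `t` is a maximal node of `T`: it has no successor in `T`. -/
def IsMaxNode (T : Set (List ℕ)) (t : List ℕ) : Prop :=
  ∀ k : ℕ, t ++ [k] ∉ T

/-- A probability tree on `T`. -/
def IsProbTree (T : Set (List ℕ)) (p : List ℕ → ℕ → ℝ≥0∞) : Prop :=
  ∀ t ∈ T, ¬ IsMaxNode T t →
    (∀ k : ℕ, t ++ [k] ∉ T → p t k = 0) ∧ (∑' k : ℕ, p t k = 1)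

/-- The measure induced by a probability tree: `Ξ_p(t) = ∏_{i<|t|} p (t↾i) (t i)`. -/
def Xi (p : List ℕ → ℕ → ℝ≥0∞) (t : List ℕ) : ℝ≥0∞ :=
  ∏ i ∈ Finset.range t.length, p (t.take i) (t.getD i 0)

/-- An inductive probability measure on `T`. -/
def IsIPM (T : Set (List ℕ)) (ξ : List ℕ → ℝ≥0∞) : Prop :=
  ξ [] = 1 ∧ ∀ t ∈ T, ¬ IsMaxNode T t →
    ξ t = ∑' k : {k : ℕ // t ++ [k] ∈ T}, ξ (t ++ [k.1])

/-- The set of infinite branches of `T`. -/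
def limT (T : Set (List ℕ)) : Set (ℕ → ℕ) :=
  {x | ∀ n : ℕ, (List.range n).map x ∈ T}

/-- `T` is pruned: every node has a successor in `T`. -/
def Pruned (T : Set (List ℕ)) : Prop := ∀ t ∈ T, ∃ k : ℕ, t ++ [k] ∈ T

/-- The basic clopen set `[t]` of branches through `t`. -/
def cyl (T : Set (List ℕ)) (t : List ℕ) : Set ↥(limT T) :=
  {x | (List.range t.length).map x.1 = t}

/-- `ξ` is free: all branches have measure (infimum) zero. -/
def FreeIPM (T : Set (List ℕ)) (ξ : List ℕ → ℝ≥0∞) : Prop :=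
  ∀ x ∈ limT T, (⨅ n : ℕ, ξ ((List.range n).map x)) = 0

/-- Lexicographic order for lists (of equal length): they first differ at some
index `i < |s|` where `s` is smaller. -/
def lexLt (s t : List ℕ) : Prop :=
  ∃ i : ℕ, i < s.length ∧ s.take i = t.take i ∧ s.getD i 0 < t.getD i 0

/-- The left endpoint `a_t` of the interval associated to `t`. -/
def aT (T : Set (List ℕ)) (ξ : List ℕ → ℝ≥0∞) (t : List ℕ) : ℝ :=
  (∑' s : {s : List ℕ // s ∈ T ∧ s.length = t.length ∧ lexLt s t}, ξ s.1).toReal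

/-- The right endpoint `b_t = a_t + ξ(t)`. -/
def bT (T : Set (List ℕ)) (ξ : List ℕ → ℝ≥0∞) (t : List ℕ) : ℝ :=
  aT T ξ t + (ξ t).toReal

/-- The set of endpoints `Q_ξ`. -/
def Qxi (T : Set (List ℕ)) (ξ : List ℕ → ℝ≥0∞) : Set ℝ :=
  {y | ∃ t ∈ T, y = aT T ξ t} ∪ {y | ∃ t ∈ T, y = bT T ξ t}

/-- The map `f_ξ : lim T → [0,1]`, `x ↦ sup_n a_{x↾n}`. -/
def fXi (T : Set (List ℕ)) (ξ : List ℕ → ℝ≥0∞) (x : ↥(limT T)) : ℝ :=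
  ⨆ n : ℕ, aT T ξ ((List.range n).map x.1)

-- auxiliary defs
def Ae (T : Set (List ℕ)) (ξ : List ℕ → ℝ≥0∞) (t : List ℕ) : ℝ≥0∞ :=
  ∑' s : {s : List ℕ // s ∈ T ∧ s.length = t.length ∧ lexLt s t}, ξ s.1

open Classical in
def ch (T : Set (List ℕ)) (ξ : List ℕ → ℝ≥0∞) (t : List ℕ) (j : ℕ) : ℝ≥0∞ :=
  if t ++ [j] ∈ T then ξ (t ++ [j]) else 0

def Be (T : Set (List ℕ)) (ξ : List ℕ → ℝ≥0∞) (t : List ℕ) (k : ℕ) : ℝ≥0∞ :=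
  ∑ j ∈ Finset.range k, ch T ξ t j

variable {T : Set (List ℕ)} {ξ : List ℕ → ℝ≥0∞}

lemma tree_nil (hT : IsTree T) : [] ∈ T := by
  obtain ⟨t, ht⟩ := hT.1
  exact hT.2 [] t (List.nil_prefix) ht

lemma tree_pre (hT : IsTree T) {t : List ℕ} {k : ℕ} (h : t ++ [k] ∈ T) : t ∈ T :=
  hT.2 t (t ++ [k]) (List.prefix_append _ _) h

lemma ipm_step (hpr : Pruned T) (hξ : IsIPM T ξ) {t : List ℕ} (ht : t ∈ T) :
    ξ t = ∑' j : ℕ, ch T ξ t j := by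
  have hnm : ¬ IsMaxNode T t := by
    obtain ⟨k, hk⟩ := hpr t ht
    intro h; exact h k hk
  have h1 := hξ.2 t ht hnm
  rw [h1]
  have : ∀ j : ℕ, ch T ξ t j = Set.indicator {k : ℕ | t ++ [k] ∈ T} (fun k => ξ (t ++ [k])) j := by
    intro j; simp [ch, Set.indicator_apply]; rfl
  rw [tsum_congr this, ← tsum_subtype]
  rfl

lemma Be_mono {t : List ℕ} {k k' : ℕ} (h : k ≤ k') : Be T ξ t k ≤ Be T ξ t k' :=
  Finset.sum_le_sum_of_subset (Finset.range_subset_range.2 h)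

lemma Be_succ {t : List ℕ} (k : ℕ) : Be T ξ t (k + 1) = Be T ξ t k + ch T ξ t k :=
  Finset.sum_range_succ _ _

lemma Be_le (hpr : Pruned T) (hξ : IsIPM T ξ) {t : List ℕ} (ht : t ∈ T) (k : ℕ) :
    Be T ξ t k ≤ ξ t := by
  rw [ipm_step hpr hξ ht]; exact ENNReal.sum_le_tsum _

lemma iSup_Be (hpr : Pruned T) (hξ : IsIPM T ξ) {t : List ℕ} (ht : t ∈ T) :
    (⨆ k, Be T ξ t k) = ξ t := by
  rw [ipm_step hpr hξ ht, ENNReal.tsum_eq_iSup_nat]; rfl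

lemma xi_child_le (hpr : Pruned T) (hξ : IsIPM T ξ) {t : List ℕ} (ht : t ∈ T) (k : ℕ)
    (htk : t ++ [k] ∈ T) : ξ (t ++ [k]) ≤ ξ t := by
  rw [ipm_step hpr hξ ht]
  have := ENNReal.le_tsum (f := fun j => ch T ξ t j) k
  simpa [ch, htk] using this

lemma xi_le_one (hT : IsTree T) (hpr : Pruned T) (hξ : IsIPM T ξ) {t : List ℕ} (ht : t ∈ T) :
    ξ t ≤ 1 := by
  induction t using List.reverseRecOn with
  | nil => exact le_of_eq hξ.1
  | append_singleton t k ih =>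
      have ht' : t ∈ T := tree_pre hT ht
      exact le_trans (xi_child_le hpr hξ ht' k ht) (ih ht')

lemma lexLt_irrefl (t : List ℕ) : ¬ lexLt t t := by
  rintro ⟨i, _, _, hlt⟩; omega

lemma lexLt_append_iff {s t : List ℕ} (h : s.length = t.length) (j k : ℕ) :
    lexLt (s ++ [j]) (t ++ [k]) ↔ lexLt s t ∨ (s = t ∧ j < k) := by
  constructor
  · rintro ⟨i, hi, htake, hlt⟩
    simp only [List.length_append, List.length_singleton] at hi
    rcases lt_or_ge i s.length with hi' | hi'
    · left
      refine ⟨i, hi', ?_, ?_⟩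
      · rwa [List.take_append_of_le_length (le_of_lt hi'),
          List.take_append_of_le_length (by omega)] at htake
      · rwa [List.getD_append _ _ _ _ hi', List.getD_append _ _ _ _ (by omega)] at hlt
    · have hieq : i = s.length := by omega
      subst hieq
      right
      have h1 : (s ++ [j]).take s.length = s := by
        simp [List.take_append_of_le_length (le_refl _)]
      have h2 : (t ++ [k]).take s.length = t := by
        rw [List.take_append_of_le_length (by omega)]
        simp [h]
      constructor
      · rw [h1, h2] at htake; exact htake
      · rw [List.getD_append_right _ _ _ _ (le_refl _)] at hlt
        rw [List.getD_append_right _ _ _ _ (by omega)] at hlt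
        simp [h] at hlt
        simpa using hlt
  · rintro (⟨i, hi, htake, hlt⟩ | ⟨rfl, hjk⟩)
    · refine ⟨i, by simp; omega, ?_, ?_⟩
      · rw [List.take_append_of_le_length (le_of_lt hi),
          List.take_append_of_le_length (by omega)]
        exact htake
      · rwa [List.getD_append _ _ _ _ hi, List.getD_append _ _ _ _ (by omega)]
    · refine ⟨s.length, by simp, ?_, ?_⟩
      · simp [List.take_append_of_le_length (le_refl _)]
      · rw [List.getD_append_right _ _ _ _ (le_refl _),
          List.getD_append_right _ _ _ _ (le_refl _)]
        simpa using hjk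

open Classical in
lemma tsum_subtype_ite (ξ : List ℕ → ℝ≥0∞) (P : List ℕ → Prop) :
    (∑' s : {s : List ℕ // P s}, ξ s.1) = ∑' s : List ℕ, if P s then ξ s else 0 := by
  calc (∑' s : {s : List ℕ // P s}, ξ s.1)
      = ∑' s : List ℕ, Set.indicator {s : List ℕ | P s} ξ s := tsum_subtype _ _
    _ = _ := tsum_congr fun s => by by_cases h : P s <;> simp [Set.indicator_apply, h]

open Classical in
lemma Ae_append (hT : IsTree T) (hpr : Pruned T) (hξ : IsIPM T ξ) {t : List ℕ}
    (ht : t ∈ T) (k : ℕ) : Ae T ξ (t ++ [k]) = Ae T ξ t + Be T ξ t k := by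
  have hAe : Ae T ξ (t ++ [k]) = ∑' s : List ℕ,
      if (s ∈ T ∧ s.length = t.length + 1 ∧ lexLt s (t ++ [k])) then ξ s else 0 := by
    rw [Ae, tsum_subtype_ite ξ _]
    exact tsum_congr fun s => by simp [List.length_append]
  set g : List ℕ → ℝ≥0∞ := fun s =>
    if (s ∈ T ∧ s.length = t.length + 1 ∧ lexLt s (t ++ [k])) then ξ s else 0 with hg
  have hinj : Function.Injective (fun p : List ℕ × ℕ => p.1 ++ [p.2]) := by
    rintro ⟨a, b⟩ ⟨c, d⟩ hcd
    simp only at hcd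
    obtain ⟨h1, h2⟩ := List.append_inj' hcd rfl
    simp at h2
    simp [h1, h2]
  have hsupp : Function.support g ⊆ Set.range (fun p : List ℕ × ℕ => p.1 ++ [p.2]) := by
    intro s hs
    have hne : s ≠ [] := by
      intro h
      subst h
      simp [hg] at hs
    exact ⟨(s.dropLast, s.getLast hne), List.dropLast_append_getLast hne⟩
  have hstep : ∑' s : List ℕ, g s = ∑' p : List ℕ × ℕ, g (p.1 ++ [p.2]) :=
    (hinj.tsum_eq hsupp).symm
  have hprod : ∑' p : List ℕ × ℕ, g (p.1 ++ [p.2]) = ∑' u : List ℕ, ∑' j : ℕ, g (u ++ [j]) :=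
    ENNReal.tsum_prod (f := fun u j => g (u ++ [j]))
  have hinner : ∀ u : List ℕ, (∑' j : ℕ, g (u ++ [j])) =
      (if (u ∈ T ∧ u.length = t.length ∧ lexLt u t) then ξ u else 0)
      + (if u = t then Be T ξ t k else 0) := by
    intro u
    by_cases hlen : u.length = t.length
    · by_cases hlex : lexLt u t
      · have hut : u ≠ t := by rintro rfl; exact lexLt_irrefl u hlex
        have : ∀ j : ℕ, g (u ++ [j]) = ch T ξ u j := by
          intro j
          simp only [hg, ch]
          by_cases hj : u ++ [j] ∈ T
          · rw [if_pos hj, if_pos]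
            refine ⟨hj, by simp [hlen], ?_⟩
            rw [lexLt_append_iff hlen]
            exact Or.inl hlex
          · rw [if_neg hj, if_neg (by tauto)]
        rw [tsum_congr this, if_neg hut, add_zero]
        by_cases hu : u ∈ T
        · rw [if_pos ⟨hu, hlen, hlex⟩]
          exact (ipm_step hpr hξ hu).symm
        · rw [if_neg (by tauto)]
          have hz : ∀ j, ch T ξ u j = 0 := fun j => by
            simp only [ch]
            rw [if_neg (fun hj => hu (tree_pre hT hj))]
          rw [tsum_congr hz]
          simp
      · by_cases hut : u = t
        · subst hut
          rw [if_neg (by tauto), if_pos rfl, zero_add]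
          have : ∀ j : ℕ, g (u ++ [j]) = if j < k then ch T ξ u j else 0 := by
            intro j
            simp only [hg, ch]
            by_cases hj : u ++ [j] ∈ T
            · by_cases hjk : j < k
              · rw [if_pos ⟨hj, by simp, (lexLt_append_iff rfl j k).2 (Or.inr ⟨rfl, hjk⟩)⟩,
                  if_pos hjk, if_pos hj]
              · rw [if_neg ?_, if_neg hjk]
                rintro ⟨-, -, hlex'⟩
                rcases (lexLt_append_iff rfl j k).1 hlex' with h | h
                · exact hlex h
                · exact hjk h.2
            · rw [if_neg (by tauto)]
              by_cases hjk : j < k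
              · rw [if_pos hjk, if_neg hj]
              · rw [if_neg hjk]
          rw [tsum_congr this]
          rw [tsum_eq_sum (s := Finset.range k) (fun j hj => by
            rw [if_neg (by simpa using hj)])]
          exact Finset.sum_congr rfl fun j hj => if_pos (Finset.mem_range.1 hj)
        · rw [if_neg (by tauto), if_neg hut, add_zero]
          have hz : ∀ j : ℕ, g (u ++ [j]) = 0 := by
            intro j
            simp only [hg]
            rw [if_neg]
            rintro ⟨-, -, hlex'⟩
            rcases (lexLt_append_iff hlen j k).1 hlex' with h | h
            · exact hlex h
            · exact hut h.1
          rw [tsum_congr hz]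
          simp
    · rw [if_neg (by tauto), if_neg (by rintro rfl; omega), add_zero]
      have hz : ∀ j : ℕ, g (u ++ [j]) = 0 := by
        intro j
        simp only [hg]
        rw [if_neg]
        rintro ⟨-, hl, -⟩
        simp at hl
        omega
      rw [tsum_congr hz]
      simp
  rw [hAe, hstep, hprod, tsum_congr hinner, ENNReal.tsum_add]
  congr 1
  · rw [Ae, tsum_subtype_ite ξ _]
    exact tsum_congr fun a => by by_cases h : (a ∈ T ∧ a.length = t.length ∧ lexLt a t) <;> simp [h]
  · exact tsum_ite_eq t (fun _ => Be T ξ t k)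

lemma Ae_nil : Ae T ξ [] = 0 := by
  have : IsEmpty {s : List ℕ // s ∈ T ∧ s.length = ([] : List ℕ).length ∧ lexLt s []} := by
    refine ⟨?_⟩
    rintro ⟨s, -, h2, i, hi, -⟩
    simp at h2
    subst h2
    simp at hi
  exact tsum_empty

lemma Ae_add_xi_le_one (hT : IsTree T) (hpr : Pruned T) (hξ : IsIPM T ξ) {t : List ℕ}
    (ht : t ∈ T) : Ae T ξ t + ξ t ≤ 1 := by
  induction t using List.reverseRecOn with
  | nil => rw [Ae_nil, hξ.1, zero_add]
  | append_singleton t k ih =>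
      have ht' : t ∈ T := tree_pre hT ht
      rw [Ae_append hT hpr hξ ht' k, add_assoc]
      refine le_trans (add_le_add_right ?_ _) (ih ht')
      have : Be T ξ t k + ξ (t ++ [k]) = Be T ξ t (k + 1) := by
        rw [Be_succ]
        congr 1
        simp [ch, ht]
      rw [this]
      exact Be_le hpr hξ ht' (k + 1)

lemma Ae_le_one (hT : IsTree T) (hpr : Pruned T) (hξ : IsIPM T ξ) {t : List ℕ}
    (ht : t ∈ T) : Ae T ξ t ≤ 1 :=
  le_trans le_self_add (Ae_add_xi_le_one hT hpr hξ ht)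

lemma Ae_ne_top (hT : IsTree T) (hpr : Pruned T) (hξ : IsIPM T ξ) {t : List ℕ}
    (ht : t ∈ T) : Ae T ξ t ≠ ⊤ :=
  ne_top_of_le_ne_top ENNReal.one_ne_top (Ae_le_one hT hpr hξ ht)

lemma xi_ne_top (hT : IsTree T) (hpr : Pruned T) (hξ : IsIPM T ξ) {t : List ℕ}
    (ht : t ∈ T) : ξ t ≠ ⊤ :=
  ne_top_of_le_ne_top ENNReal.one_ne_top (xi_le_one hT hpr hξ ht)

lemma Be_ne_top (hT : IsTree T) (hpr : Pruned T) (hξ : IsIPM T ξ) {t : List ℕ}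
    (ht : t ∈ T) (k : ℕ) : Be T ξ t k ≠ ⊤ :=
  ne_top_of_le_ne_top (xi_ne_top hT hpr hξ ht) (Be_le hpr hξ ht k)

lemma aT_eq (t : List ℕ) : aT T ξ t = (Ae T ξ t).toReal := rfl

lemma aT_nonneg (t : List ℕ) : 0 ≤ aT T ξ t := ENNReal.toReal_nonneg

lemma aT_nil : aT T ξ [] = 0 := by rw [aT_eq, Ae_nil]; simp

lemma bT_nil (hξ : IsIPM T ξ) : bT T ξ [] = 1 := by
  rw [bT, aT_nil, hξ.1]; simp

lemma aT_append (hT : IsTree T) (hpr : Pruned T) (hξ : IsIPM T ξ) {t : List ℕ}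
    (ht : t ∈ T) (k : ℕ) :
    aT T ξ (t ++ [k]) = aT T ξ t + (Be T ξ t k).toReal := by
  rw [aT_eq, aT_eq, Ae_append hT hpr hξ ht k,
    ENNReal.toReal_add (Ae_ne_top hT hpr hξ ht) (Be_ne_top hT hpr hξ ht k)]

lemma bT_append (hT : IsTree T) (hpr : Pruned T) (hξ : IsIPM T ξ) {t : List ℕ} {k : ℕ}
    (ht : t ∈ T) (htk : t ++ [k] ∈ T) :
    bT T ξ (t ++ [k]) = aT T ξ t + (Be T ξ t (k + 1)).toReal := by
  rw [bT, aT_append hT hpr hξ ht k, add_assoc]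
  congr 1
  rw [← ENNReal.toReal_add (Be_ne_top hT hpr hξ ht k) (xi_ne_top hT hpr hξ htk)]
  congr 1
  rw [Be_succ]
  congr 1
  simp [ch, htk]

lemma aT_le_bT (t : List ℕ) : aT T ξ t ≤ bT T ξ t :=
  le_add_of_nonneg_right ENNReal.toReal_nonneg

lemma BeR_mono (hT : IsTree T) (hpr : Pruned T) (hξ : IsIPM T ξ) {t : List ℕ}
    (ht : t ∈ T) {k k' : ℕ} (h : k ≤ k') :
    (Be T ξ t k).toReal ≤ (Be T ξ t k').toReal :=
  ENNReal.toReal_mono (Be_ne_top hT hpr hξ ht k') (Be_mono h)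

lemma aT_le_aT_append (hT : IsTree T) (hpr : Pruned T) (hξ : IsIPM T ξ) {t : List ℕ}
    (ht : t ∈ T) (k : ℕ) : aT T ξ t ≤ aT T ξ (t ++ [k]) := by
  rw [aT_append hT hpr hξ ht k]
  exact le_add_of_nonneg_right ENNReal.toReal_nonneg

lemma bT_append_le (hT : IsTree T) (hpr : Pruned T) (hξ : IsIPM T ξ) {t : List ℕ} {k : ℕ}
    (ht : t ∈ T) (htk : t ++ [k] ∈ T) : bT T ξ (t ++ [k]) ≤ bT T ξ t := by
  rw [bT_append hT hpr hξ ht htk, bT]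
  exact add_le_add_right
    (ENNReal.toReal_mono (xi_ne_top hT hpr hξ ht) (Be_le hpr hξ ht (k + 1))) _

lemma bT_le_aT_sibling (hT : IsTree T) (hpr : Pruned T) (hξ : IsIPM T ξ) {t : List ℕ}
    {j k : ℕ} (ht : t ∈ T) (htj : t ++ [j] ∈ T) (hjk : j < k) :
    bT T ξ (t ++ [j]) ≤ aT T ξ (t ++ [k]) := by
  rw [bT_append hT hpr hξ ht htj, aT_append hT hpr hξ ht k]
  exact add_le_add_right (BeR_mono hT hpr hξ ht hjk) _

lemma bT_le_one (hT : IsTree T) (hpr : Pruned T) (hξ : IsIPM T ξ) {t : List ℕ}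
    (ht : t ∈ T) : bT T ξ t ≤ 1 := by
  rw [bT, aT_eq, ← ENNReal.toReal_add (Ae_ne_top hT hpr hξ ht) (xi_ne_top hT hpr hξ ht),
    show (1 : ℝ) = (1 : ℝ≥0∞).toReal by simp]
  exact ENNReal.toReal_mono ENNReal.one_ne_top (Ae_add_xi_le_one hT hpr hξ ht)

lemma aT_le_one (hT : IsTree T) (hpr : Pruned T) (hξ : IsIPM T ξ) {t : List ℕ}
    (ht : t ∈ T) : aT T ξ t ≤ 1 :=
  le_trans (aT_le_bT t) (bT_le_one hT hpr hξ ht)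

lemma br_succ (x : ℕ → ℕ) (n : ℕ) :
    (List.range (n + 1)).map x = (List.range n).map x ++ [x n] := by
  rw [List.range_succ, List.map_append]
  simp

lemma aT_br_mono (hT : IsTree T) (hpr : Pruned T) (hξ : IsIPM T ξ) {x : ℕ → ℕ}
    (hx : x ∈ limT T) : Monotone fun n => aT T ξ ((List.range n).map x) := by
  apply monotone_nat_of_le_succ
  intro n
  rw [br_succ x n]
  exact aT_le_aT_append hT hpr hξ (hx n) (x n)

lemma bT_br_anti (hT : IsTree T) (hpr : Pruned T) (hξ : IsIPM T ξ) {x : ℕ → ℕ}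
    (hx : x ∈ limT T) : Antitone fun n => bT T ξ ((List.range n).map x) := by
  apply antitone_nat_of_succ_le
  intro n
  rw [br_succ x n]
  exact bT_append_le hT hpr hξ (hx n) (by rw [← br_succ x n]; exact hx (n + 1))

lemma aT_br_le_bT_br (hT : IsTree T) (hpr : Pruned T) (hξ : IsIPM T ξ) {x : ℕ → ℕ}
    (hx : x ∈ limT T) (m n : ℕ) :
    aT T ξ ((List.range m).map x) ≤ bT T ξ ((List.range n).map x) := by
  rcases le_total m n with h | h
  · exact le_trans (aT_br_mono hT hpr hξ hx h) (aT_le_bT _)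
  · exact le_trans (aT_le_bT _) (bT_br_anti hT hpr hξ hx h)

lemma fXi_le_bT (hT : IsTree T) (hpr : Pruned T) (hξ : IsIPM T ξ) (x : ↥(limT T)) (n : ℕ) :
    fXi T ξ x ≤ bT T ξ ((List.range n).map x.1) :=
  ciSup_le fun m => aT_br_le_bT_br hT hpr hξ x.2 m n

lemma aT_le_fXi (hT : IsTree T) (hpr : Pruned T) (hξ : IsIPM T ξ) (x : ↥(limT T)) (n : ℕ) :
    aT T ξ ((List.range n).map x.1) ≤ fXi T ξ x := by
  have hb : BddAbove (Set.range fun m => aT T ξ ((List.range m).map x.1)) := by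
    refine ⟨bT T ξ [], ?_⟩
    rintro r ⟨m, rfl⟩
    simpa using aT_br_le_bT_br hT hpr hξ x.2 m 0
  exact le_ciSup hb n

lemma fXi_nonneg (hT : IsTree T) (hpr : Pruned T) (hξ : IsIPM T ξ) (x : ↥(limT T)) :
    0 ≤ fXi T ξ x := by
  have := aT_le_fXi hT hpr hξ x 0
  simpa [aT_nil] using this

lemma fXi_le_one (hT : IsTree T) (hpr : Pruned T) (hξ : IsIPM T ξ) (x : ↥(limT T)) :
    fXi T ξ x ≤ 1 := by
  have := fXi_le_bT hT hpr hξ x 0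
  simpa [bT_nil hξ] using this

lemma exists_xi_small (hT : IsTree T) (hpr : Pruned T) (hξ : IsIPM T ξ)
    (hfree : FreeIPM T ξ) {x : ℕ → ℕ} (hx : x ∈ limT T) {ε : ℝ} (hε : 0 < ε) :
    ∃ n : ℕ, (ξ ((List.range n).map x)).toReal < ε := by
  have h0 := hfree x hx
  have : (⨅ n : ℕ, ξ ((List.range n).map x)) < ENNReal.ofReal ε := by
    rw [h0]
    exact ENNReal.ofReal_pos.2 hε
  obtain ⟨n, hn⟩ := iInf_lt_iff.1 this
  exact ⟨n, by
    rwa [ENNReal.lt_ofReal_iff_toReal_lt (xi_ne_top hT hpr hξ (hx n))] at hn⟩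

lemma map_range_eq_of_agree {x y : ℕ → ℕ} {n : ℕ} (h : ∀ i < n, x i = y i) :
    (List.range n).map x = (List.range n).map y :=
  List.map_congr_left fun i hi => h i (List.mem_range.1 hi)

lemma cyl_mem_nhds {n : ℕ} (x : ↥(limT T)) :
    {y : ↥(limT T) | ∀ i < n, y.1 i = x.1 i} ∈ nhds x := by
  have : {y : ↥(limT T) | ∀ i < n, y.1 i = x.1 i} =
      ⋂ i ∈ Finset.range n, {y : ↥(limT T) | y.1 i = x.1 i} := by
    ext y
    simp [Set.mem_iInter]
  rw [this]
  refine Filter.biInter_finset_mem _ |>.2 fun i _ => ?_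
  refine IsOpen.mem_nhds ?_ rfl
  have hc : Continuous fun y : ↥(limT T) => y.1 i :=
    (continuous_apply i).comp continuous_subtype_val
  exact (isOpen_discrete {x.1 i}).preimage hc

lemma fXi_continuous (hT : IsTree T) (hpr : Pruned T) (hξ : IsIPM T ξ)
    (hfree : FreeIPM T ξ) : Continuous (fXi T ξ) := by
  rw [continuous_iff_continuousAt]
  intro x
  rw [ContinuousAt, Metric.tendsto_nhds]
  intro ε hε
  obtain ⟨n, hn⟩ := exists_xi_small hT hpr hξ hfree x.2 hε
  filter_upwards [cyl_mem_nhds (n := n) x] with y hy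
  have hbr : (List.range n).map y.1 = (List.range n).map x.1 := map_range_eq_of_agree hy
  have h1 := aT_le_fXi hT hpr hξ y n
  have h2 := fXi_le_bT hT hpr hξ y n
  have h3 := aT_le_fXi hT hpr hξ x n
  have h4 := fXi_le_bT hT hpr hξ x n
  rw [hbr] at h1 h2
  rw [Real.dist_eq, abs_sub_lt_iff]
  unfold bT at h2 h4
  constructor <;> nlinarith

lemma exists_first_diff {x y : ℕ → ℕ} {n : ℕ}
    (h : (List.range n).map x ≠ (List.range n).map y) :
    ∃ j : ℕ, j < n ∧ x j ≠ y j ∧ (List.range j).map x = (List.range j).map y := by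
  have hex : ∃ j, x j ≠ y j := by
    by_contra hc
    push_neg at hc
    exact h (map_range_eq_of_agree fun i _ => hc i)
  classical
  let j := Nat.find hex
  have hj : x j ≠ y j := Nat.find_spec hex
  have hmin : ∀ i < j, x i = y i := fun i hi => by
    by_contra hc
    exact absurd (Nat.find_le hc) (not_le.2 hi)
  refine ⟨j, ?_, hj, map_range_eq_of_agree hmin⟩
  by_contra hc
  push_neg at hc
  exact h (map_range_eq_of_agree fun i hi => hmin i (lt_of_lt_of_le hi hc))

/-- Separation: branches whose `fXi` value lies strictly inside `(a_{x↾n}, b_{x↾n})`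
agree with `x` on the first `n` coordinates. -/
lemma sep (hT : IsTree T) (hpr : Pruned T) (hξ : IsIPM T ξ) {x z : ↥(limT T)} {n : ℕ}
    (hax : aT T ξ ((List.range n).map x.1) < fXi T ξ z)
    (hbx : fXi T ξ z < bT T ξ ((List.range n).map x.1)) :
    (List.range n).map z.1 = (List.range n).map x.1 := by
  by_contra hne
  obtain ⟨j, hjn, hjz, hagree⟩ := exists_first_diff hne
  set u := (List.range j).map x.1 with hu
  have hzu : (List.range j).map z.1 = u := hagree
  have hzsucc : (List.range (j + 1)).map z.1 = u ++ [z.1 j] := by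
    rw [br_succ, hzu]
  have hxsucc : (List.range (j + 1)).map x.1 = u ++ [x.1 j] := br_succ x.1 j
  have huT : u ∈ T := x.2 j
  have hzT : u ++ [z.1 j] ∈ T := by rw [← hzsucc]; exact z.2 (j + 1)
  have hxT : u ++ [x.1 j] ∈ T := by rw [← hxsucc]; exact x.2 (j + 1)
  rcases lt_or_gt_of_ne hjz with hlt | hgt
  · -- z.1 j < x.1 j : fXi z ≤ b(u++[z j]) ≤ a(u++[x j]) ≤ a(x↾n)
    have h1 : fXi T ξ z ≤ bT T ξ (u ++ [z.1 j]) := by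
      rw [← hzsucc]; exact fXi_le_bT hT hpr hξ z (j + 1)
    have h2 : bT T ξ (u ++ [z.1 j]) ≤ aT T ξ (u ++ [x.1 j]) :=
      bT_le_aT_sibling hT hpr hξ huT hzT hlt
    have h3 : aT T ξ (u ++ [x.1 j]) ≤ aT T ξ ((List.range n).map x.1) := by
      rw [← hxsucc]
      exact aT_br_mono hT hpr hξ x.2 (by omega : j + 1 ≤ n)
    linarith
  · -- x.1 j < z.1 j : fXi z ≥ a(z↾(j+1)) ≥ b(x↾(j+1)) ≥ b(x↾n)
    have h1 : aT T ξ (u ++ [z.1 j]) ≤ fXi T ξ z := by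
      rw [← hzsucc]; exact aT_le_fXi hT hpr hξ z (j + 1)
    have h2 : bT T ξ (u ++ [x.1 j]) ≤ aT T ξ (u ++ [z.1 j]) :=
      bT_le_aT_sibling hT hpr hξ huT hxT hgt
    have h3 : bT T ξ ((List.range n).map x.1) ≤ bT T ξ (u ++ [x.1 j]) := by
      rw [← hxsucc]
      exact bT_br_anti hT hpr hξ x.2 (by omega : j + 1 ≤ n)
    linarith

lemma keystep (hT : IsTree T) (hpr : Pruned T) (hξ : IsIPM T ξ) {t : List ℕ} (ht : t ∈ T)
    {y : ℝ} (hy1 : aT T ξ t ≤ y) (hy2 : y < bT T ξ t) :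
    ∃ k : ℕ, t ++ [k] ∈ T ∧ aT T ξ (t ++ [k]) ≤ y ∧ y < bT T ξ (t ++ [k]) := by
  classical
  set c := y - aT T ξ t with hc
  have hc0 : 0 ≤ c := by linarith
  have hcξ : c < (ξ t).toReal := by rw [bT] at hy2; linarith
  have hex : ∃ m : ℕ, c < (Be T ξ t m).toReal := by
    by_contra hcon
    push_neg at hcon
    have hle : ∀ m, Be T ξ t m ≤ ENNReal.ofReal c := fun m =>
      (ENNReal.le_ofReal_iff_toReal_le (Be_ne_top hT hpr hξ ht m) hc0).2 (hcon m)
    have : ξ t ≤ ENNReal.ofReal c := by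
      rw [← iSup_Be hpr hξ ht]
      exact iSup_le hle
    have := ENNReal.toReal_mono ENNReal.ofReal_ne_top this
    rw [ENNReal.toReal_ofReal hc0] at this
    linarith
  set N := Nat.find hex with hN
  have hNspec : c < (Be T ξ t N).toReal := Nat.find_spec hex
  have hN0 : N ≠ 0 := by
    intro h
    rw [h] at hNspec
    simp [Be] at hNspec
    linarith
  obtain ⟨k, hk⟩ : ∃ k, N = k + 1 := ⟨N - 1, by omega⟩
  have hklt : ¬ c < (Be T ξ t k).toReal := Nat.find_min hex (by omega)
  push_neg at hklt
  have hmemk : t ++ [k] ∈ T := by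
    by_contra hmem
    have : Be T ξ t (k + 1) = Be T ξ t k := by
      rw [Be_succ]
      simp [ch, hmem]
    rw [hk, this] at hNspec
    linarith
  refine ⟨k, hmemk, ?_, ?_⟩
  · rw [aT_append hT hpr hξ ht k]
    linarith
  · rw [bT_append hT hpr hξ ht hmemk, ← hk]
    linarith

/-- Surjectivity onto `[0,1)`. -/
lemma fXi_surj (hT : IsTree T) (hpr : Pruned T) (hξ : IsIPM T ξ) (hfree : FreeIPM T ξ)
    {y : ℝ} (hy0 : 0 ≤ y) (hy1 : y < 1) : ∃ x : ↥(limT T), fXi T ξ x = y := by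
  classical
  set Inv : List ℕ → Prop := fun t => t ∈ T ∧ aT T ξ t ≤ y ∧ y < bT T ξ t with hInv
  have hnext : ∀ t, Inv t → ∃ k : ℕ, Inv (t ++ [k]) := by
    rintro t ⟨h1, h2, h3⟩
    obtain ⟨k, hk1, hk2, hk3⟩ := keystep hT hpr hξ h1 h2 h3
    exact ⟨k, hk1, hk2, hk3⟩
  set nxt : List ℕ → ℕ := fun t => if h : Inv t then Classical.choose (hnext t h) else 0
    with hnxt
  set g : ℕ → List ℕ := fun n => Nat.rec [] (fun _ s => s ++ [nxt s]) n with hgdef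
  have hg0 : g 0 = [] := rfl
  have hgs : ∀ n, g (n + 1) = g n ++ [nxt (g n)] := fun n => rfl
  have hInv0 : Inv [] := ⟨tree_nil hT, by rw [aT_nil]; exact hy0, by rwa [bT_nil hξ]⟩
  have hginv : ∀ n, Inv (g n) := by
    intro n
    induction n with
    | zero => exact hInv0
    | succ n ih =>
        rw [hgs n, hnxt]
        simp only [dif_pos ih]
        exact Classical.choose_spec (hnext (g n) ih)
  set x : ℕ → ℕ := fun n => nxt (g n) with hx
  have hbr : ∀ n, (List.range n).map x = g n := by
    intro n
    induction n with
    | zero => simp [hg0]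
    | succ n ih => rw [br_succ, ih, hgs]
  have hxlim : x ∈ limT T := fun n => by rw [hbr n]; exact (hginv n).1
  refine ⟨⟨x, hxlim⟩, ?_⟩
  have hax : ∀ n, aT T ξ ((List.range n).map x) ≤ y := fun n => by
    rw [hbr n]; exact (hginv n).2.1
  have hbx : ∀ n, y < bT T ξ ((List.range n).map x) := fun n => by
    rw [hbr n]; exact (hginv n).2.2
  refine le_antisymm (ciSup_le hax) ?_
  refine le_of_forall_pos_le_add ?_
  intro ε hε
  obtain ⟨n, hn⟩ := exists_xi_small hT hpr hξ hfree hxlim hε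
  have h1 := hbx n
  rw [bT] at h1
  have h2 : aT T ξ ((List.range n).map x) ≤ fXi T ξ ⟨x, hxlim⟩ :=
    aT_le_fXi hT hpr hξ ⟨x, hxlim⟩ n
  linarith

lemma coord_of_br_succ {x z : ℕ → ℕ} {m : ℕ}
    (h : (List.range (m + 1)).map z = (List.range (m + 1)).map x)
    (h' : (List.range m).map z = (List.range m).map x) : z m = x m := by
  rw [br_succ, br_succ, h'] at h
  have := (List.append_inj' h rfl).2
  simpa using this

lemma aT_mem_Qxi {t : List ℕ} (ht : t ∈ T) : aT T ξ t ∈ Qxi T ξ :=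
  Or.inl ⟨t, ht, rfl⟩

lemma bT_mem_Qxi {t : List ℕ} (ht : t ∈ T) : bT T ξ t ∈ Qxi T ξ :=
  Or.inr ⟨t, ht, rfl⟩

lemma sep' (hT : IsTree T) (hpr : Pruned T) (hξ : IsIPM T ξ) {x z : ↥(limT T)} {n : ℕ}
    (hxQ : fXi T ξ x ∉ Qxi T ξ) (hzx : fXi T ξ z = fXi T ξ x) :
    (List.range n).map z.1 = (List.range n).map x.1 := by
  have ha : aT T ξ ((List.range n).map x.1) < fXi T ξ x :=
    lt_of_le_of_ne (aT_le_fXi hT hpr hξ x n)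
      (fun h => hxQ (h ▸ aT_mem_Qxi (x.2 n)))
  have hb : fXi T ξ x < bT T ξ ((List.range n).map x.1) :=
    lt_of_le_of_ne (fXi_le_bT hT hpr hξ x n)
      (fun h => hxQ (h.symm ▸ bT_mem_Qxi (x.2 n)))
  exact sep hT hpr hξ (hzx ▸ ha) (hzx ▸ hb)

theorem stmt15 (T : Set (List ℕ)) (ξ : List ℕ → ℝ≥0∞)
    (hT : IsTree T) (hpr : Pruned T) (hξ : IsIPM T ξ) (hfree : FreeIPM T ξ) :
    Continuous (fXi T ξ) ∧
    Set.Ico (0 : ℝ) 1 ⊆ Set.range (fXi T ξ) ∧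
    ∃ e : {x : ↥(limT T) // fXi T ξ x ∉ Qxi T ξ} ≃ₜ ↥(Set.Icc (0 : ℝ) 1 \ Qxi T ξ),
      ∀ x : {x : ↥(limT T) // fXi T ξ x ∉ Qxi T ξ}, (e x).1 = fXi T ξ x.1 := by
  refine ⟨fXi_continuous hT hpr hξ hfree, ?_, ?_⟩
  · rintro y ⟨hy0, hy1⟩
    obtain ⟨x, hx⟩ := fXi_surj hT hpr hξ hfree hy0 hy1
    exact ⟨x, hx⟩
  · -- the homeomorphism
    set D := {x : ↥(limT T) // fXi T ξ x ∉ Qxi T ξ} with hD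
    set F : D → ↥(Set.Icc (0 : ℝ) 1 \ Qxi T ξ) := fun x =>
      ⟨fXi T ξ x.1, ⟨⟨fXi_nonneg hT hpr hξ x.1, fXi_le_one hT hpr hξ x.1⟩, x.2⟩⟩ with hF
    have hFinj : Function.Injective F := by
      intro x z hxz
      have hval : fXi T ξ x.1 = fXi T ξ z.1 := congrArg Subtype.val hxz
      have hbr : ∀ n, (List.range n).map x.1.1 = (List.range n).map z.1.1 :=
        fun n => sep' hT hpr hξ z.2 hval
      have : x.1.1 = z.1.1 := funext fun m => coord_of_br_succ (hbr (m + 1)) (hbr m)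
      exact Subtype.ext (Subtype.ext this)
    have hFsurj : Function.Surjective F := by
      rintro ⟨y, ⟨⟨hy0, hy1⟩, hyQ⟩⟩
      have hy1' : y < 1 := by
        rcases lt_or_eq_of_le hy1 with h | h
        · exact h
        · exfalso
          apply hyQ
          have : (1 : ℝ) = bT T ξ [] := (bT_nil hξ).symm
          rw [h, this]
          exact bT_mem_Qxi (tree_nil hT)
      obtain ⟨x, hx⟩ := fXi_surj hT hpr hξ hfree hy0 hy1'
      refine ⟨⟨x, by rw [hx]; exact hyQ⟩, ?_⟩
      exact Subtype.ext hx
    set e0 := Equiv.ofBijective F ⟨hFinj, hFsurj⟩ with he0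
    have hcontF : Continuous F :=
      ((fXi_continuous hT hpr hξ hfree).comp continuous_subtype_val).subtype_mk _
    have hcontG : Continuous e0.symm := by
      have hcoord : ∀ m : ℕ, Continuous fun r : ↥(Set.Icc (0 : ℝ) 1 \ Qxi T ξ) =>
          ((e0.symm r).1.1 : ℕ → ℕ) m := by
        intro m
        rw [continuous_iff_continuousAt]
        intro r
        refine Filter.Tendsto.mono_right (Filter.tendsto_pure.2 ?_) (pure_le_nhds _)
        set x : ↥(limT T) := (e0.symm r).1 with hxdef
        have hxQ : fXi T ξ x ∉ Qxi T ξ := (e0.symm r).2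
        have hFx : fXi T ξ x = r.1 := congrArg Subtype.val (e0.apply_symm_apply r)
        set n := m + 1 with hn
        set u := (List.range n).map x.1 with hu
        have ha : aT T ξ u < r.1 := by
          rw [← hFx]
          exact lt_of_le_of_ne (aT_le_fXi hT hpr hξ x n)
            (fun h => hxQ (h ▸ aT_mem_Qxi (x.2 n)))
        have hb : r.1 < bT T ξ u := by
          rw [← hFx]
          exact lt_of_le_of_ne (fXi_le_bT hT hpr hξ x n)
            (fun h => hxQ (h.symm ▸ bT_mem_Qxi (x.2 n)))
        set δ := min (r.1 - aT T ξ u) (bT T ξ u - r.1) with hδ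
        have hδ0 : 0 < δ := lt_min (by linarith) (by linarith)
        have hball : {r' : ↥(Set.Icc (0 : ℝ) 1 \ Qxi T ξ) | |r'.1 - r.1| < δ} ∈ nhds r := by
          have hopen : IsOpen {r' : ↥(Set.Icc (0 : ℝ) 1 \ Qxi T ξ) | |r'.1 - r.1| < δ} := by
            have heq : {r' : ↥(Set.Icc (0 : ℝ) 1 \ Qxi T ξ) | |r'.1 - r.1| < δ} =
                Subtype.val ⁻¹' Metric.ball r.1 δ := by
              ext r'
              simp [Metric.mem_ball, Subtype.dist_eq, Real.dist_eq]
            rw [heq]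
            exact Metric.isOpen_ball.preimage continuous_subtype_val
          exact hopen.mem_nhds (by simpa using hδ0)
        filter_upwards [hball] with r' hr'
        set z : ↥(limT T) := (e0.symm r').1 with hzdef
        have hFz : fXi T ξ z = r'.1 := congrArg Subtype.val (e0.apply_symm_apply r')
        have habs := abs_lt.1 hr'
        have h2l := min_le_left (r.1 - aT T ξ u) (bT T ξ u - r.1)
        have h2r := min_le_right (r.1 - aT T ξ u) (bT T ξ u - r.1)
        rw [← hδ] at h2l h2r
        have ha' : aT T ξ u < fXi T ξ z := by rw [hFz]; linarith [habs.1]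
        have hb' : fXi T ξ z < bT T ξ u := by rw [hFz]; linarith [habs.2]
        have hsep : (List.range n).map z.1 = (List.range n).map x.1 :=
          sep hT hpr hξ ha' hb'
        have ha'' : aT T ξ ((List.range m).map x.1) < fXi T ξ z :=
          lt_of_le_of_lt (aT_br_mono hT hpr hξ x.2 (by omega : m ≤ n)) ha'
        have hb'' : fXi T ξ z < bT T ξ ((List.range m).map x.1) :=
          lt_of_lt_of_le hb' (bT_br_anti hT hpr hξ x.2 (by omega : m ≤ n))
        have hsep' : (List.range m).map z.1 = (List.range m).map x.1 :=
          sep hT hpr hξ ha'' hb''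
        exact coord_of_br_succ hsep hsep'
      have h1 : Continuous fun r : ↥(Set.Icc (0 : ℝ) 1 \ Qxi T ξ) =>
          ((e0.symm r).1.1 : ℕ → ℕ) := continuous_pi hcoord
      exact Continuous.subtype_mk (Continuous.subtype_mk h1 fun r => (e0.symm r).1.2)
        fun r => (e0.symm r).2
    refine ⟨⟨e0, hcontF, hcontG⟩, fun x => rfl⟩
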